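/- For all p_0, p_1 with 0 < p_0, p_1 < 1 and every λ with 0 ≤ λ ≤ 1, the relative discrepancy satisfies B(λ) := max{RR/WR(λ), WR(λ)/RR} ≥ 1, with equality for a given λ if and only if WR(λ) = RR; moreover when p_0 ≠ p_1 one has B(λ) > 1 for every λ ∈ [0,1]. -/

import Mathlib

/-- The Aranda-Ordaz transformation `W_λ(θ)`: equals `((1-θ)^(-λ) - 1)/λ` for `λ ≠ 0`
and `-log(1-θ)` for `λ = 0`. -/
noncomputable def arandaOrdaz (l θ : ℝ) : ℝ :=
  if l = 0 then -Real.log (1 - θ) else ((1 - θ) ^ (-l) - 1) / l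

/-- The transformation-based ratio `WR(λ) = W_λ(p₁)/W_λ(p₀)`. -/
noncomputable def WR (p₀ p₁ l : ℝ) : ℝ := arandaOrdaz l p₁ / arandaOrdaz l p₀

/-- The relative discrepancy `B(λ) = max{RR/WR(λ), WR(λ)/RR}` with `RR = p₁/p₀`. -/
noncomputable def B (p₀ p₁ l : ℝ) : ℝ :=
  max ((p₁ / p₀) / WR p₀ p₁ l) (WR p₀ p₁ l / (p₁ / p₀))

lemma arandaOrdaz_zero (l : ℝ) : arandaOrdaz l 0 = 0 := by
  unfold arandaOrdaz
  split <;> simp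

lemma arandaOrdaz_pos (l : ℝ) (hl : 0 ≤ l) {θ : ℝ} (h0 : 0 < θ) (h1 : θ < 1) :
    0 < arandaOrdaz l θ := by
  unfold arandaOrdaz
  have hb0 : 0 < 1 - θ := by linarith
  have hb1 : 1 - θ < 1 := by linarith
  split
  · simpa using Real.log_neg hb0 hb1
  · rename_i hne
    have hlpos : 0 < l := lt_of_le_of_ne hl (Ne.symm hne)
    have h2 : 1 < (1 - θ) ^ (-l) := by
      rw [Real.rpow_neg hb0.le, one_lt_inv_iff₀]
      exact ⟨Real.rpow_pos_of_pos hb0 _, Real.rpow_lt_one hb0.le hb1 hlpos⟩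
    exact div_pos (by linarith) hlpos

lemma hasDerivAt_arandaOrdaz (l : ℝ) (hl : 0 ≤ l) {x : ℝ} (hx : x ∈ Set.Ioo (0:ℝ) 1) :
    HasDerivAt (arandaOrdaz l) ((1 - x) ^ (-(l + 1))) x := by
  have hb0 : 0 < 1 - x := by linarith [hx.2]
  have haff : HasDerivAt (fun y : ℝ => 1 - y) (-1) x := by
    simpa using (hasDerivAt_id x).const_sub 1
  by_cases h : l = 0
  · subst h
    have hlog : HasDerivAt (fun y : ℝ => -Real.log (1 - y)) ((1 - x)⁻¹) x := by
      have := (Real.hasDerivAt_log hb0.ne').comp x haff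
      have h2 := this.neg
      refine h2.congr_deriv ?_
      field_simp
    have heq : (1 - x) ^ (-(0 + 1) : ℝ) = (1 - x)⁻¹ := by
      rw [zero_add, Real.rpow_neg_one]
    rw [heq]
    refine hlog.congr_of_eventuallyEq ?_
    filter_upwards with y
    simp [arandaOrdaz]
  · have hrpow : HasDerivAt (fun y : ℝ => ((1 - y) ^ (-l) - 1) / l)
        ((1 - x) ^ (-(l + 1))) x := by
      have h1 : HasDerivAt (fun y : ℝ => y ^ (-l)) (-l * (1 - x) ^ (-l - 1)) (1 - x) :=
        Real.hasDerivAt_rpow_const (Or.inl hb0.ne')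
      have h2 := ((h1.comp x haff).sub_const 1).div_const l
      simp only [Function.comp] at h2
      refine h2.congr_deriv ?_
      rw [show (-l - 1 : ℝ) = -(l + 1) by ring]
      field_simp
    refine hrpow.congr_of_eventuallyEq ?_
    filter_upwards with y
    simp [arandaOrdaz, h]

lemma continuousOn_arandaOrdaz (l : ℝ) :
    ContinuousOn (arandaOrdaz l) (Set.Ico 0 1) := by
  have hb : ∀ x ∈ Set.Ico (0:ℝ) 1, (1 - x) ≠ 0 := by
    intro x hx h
    have := hx.2
    have : x = 1 := by linarith [sub_eq_zero.mp h]
    linarith [hx.2]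
  by_cases h : l = 0
  · subst h
    have heq : arandaOrdaz 0 = fun θ => -Real.log (1 - θ) := by
      funext θ; simp [arandaOrdaz]
    rw [heq]
    exact (Real.continuousOn_log.comp (continuousOn_const.sub continuousOn_id)
      (fun x hx => hb x hx)).neg
  · have heq : arandaOrdaz l = fun θ => ((1 - θ) ^ (-l) - 1) / l := by
      funext θ; simp [arandaOrdaz, h]
    rw [heq]
    exact (((continuousOn_const.sub continuousOn_id).rpow_const
      (fun x hx => Or.inl (hb x hx))).sub continuousOn_const).div_const l

lemma strictConvexOn_arandaOrdaz (l : ℝ) (hl : 0 ≤ l) :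
    StrictConvexOn ℝ (Set.Ico 0 1) (arandaOrdaz l) := by
  apply strictConvexOn_of_deriv2_pos (convex_Ico 0 1) (continuousOn_arandaOrdaz l)
  intro x hx
  rw [interior_Ico] at hx
  have hb0 : 0 < 1 - x := by linarith [hx.2]
  have hderiv : Set.EqOn (deriv (arandaOrdaz l)) (fun y => (1 - y) ^ (-(l + 1)))
      (Set.Ioo 0 1) := fun y hy => (hasDerivAt_arandaOrdaz l hl hy).deriv
  have hEq : deriv (arandaOrdaz l) =ᶠ[nhds x] (fun y => (1 - y) ^ (-(l + 1))) :=
    Filter.eventuallyEq_of_mem (isOpen_Ioo.mem_nhds hx) hderiv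
  have h2 : HasDerivAt (fun y : ℝ => (1 - y) ^ (-(l + 1)))
      ((l + 1) * (1 - x) ^ (-(l + 1) - 1)) x := by
    have haff : HasDerivAt (fun y : ℝ => 1 - y) (-1) x := by
      simpa using (hasDerivAt_id x).const_sub 1
    have h1 : HasDerivAt (fun y : ℝ => y ^ (-(l + 1)))
        (-(l + 1) * (1 - x) ^ (-(l + 1) - 1)) (1 - x) :=
      Real.hasDerivAt_rpow_const (Or.inl hb0.ne')
    have h3 := h1.comp x haff
    refine h3.congr_deriv ?_
    ring
  have hkey : (deriv^[2] (arandaOrdaz l)) x = (l + 1) * (1 - x) ^ (-(l + 1) - 1) := by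
    show deriv (deriv (arandaOrdaz l)) x = _
    rw [hEq.deriv_eq]
    exact h2.deriv
  rw [hkey]
  positivity

lemma slope_strictMono (l : ℝ) (hl : 0 ≤ l) {a b : ℝ} (ha0 : 0 < a) (hb1 : b < 1)
    (hab : a < b) : arandaOrdaz l a / a < arandaOrdaz l b / b := by
  have h := (strictConvexOn_arandaOrdaz l hl).secant_strict_mono
    (a := 0) (x := a) (y := b)
    (Set.mem_Ico.mpr ⟨le_refl 0, zero_lt_one⟩)
    (Set.mem_Ico.mpr ⟨ha0.le, lt_trans hab hb1⟩)
    (Set.mem_Ico.mpr ⟨(ha0.trans hab).le, hb1⟩)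
    ha0.ne' (ha0.trans hab).ne' hab
  simpa [arandaOrdaz_zero] using h

/-- For all `0 < p₀, p₁ < 1` and every `λ ∈ [0,1]`: `B(λ) ≥ 1`, with `B(λ) = 1`
iff `WR(λ) = RR`; moreover if `p₀ ≠ p₁` then `B(λ) > 1`. -/
theorem B_ge_one (p₀ p₁ : ℝ) (h00 : 0 < p₀) (h01 : p₀ < 1)
    (h10 : 0 < p₁) (h11 : p₁ < 1) :
    ∀ l : ℝ, 0 ≤ l → l ≤ 1 →
      1 ≤ B p₀ p₁ l ∧ (B p₀ p₁ l = 1 ↔ WR p₀ p₁ l = p₁ / p₀) ∧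
        (p₀ ≠ p₁ → 1 < B p₀ p₁ l) := by
  intro l hl0 hl1
  have hW0 : 0 < arandaOrdaz l p₀ := arandaOrdaz_pos l hl0 h00 h01
  have hW1 : 0 < arandaOrdaz l p₁ := arandaOrdaz_pos l hl0 h10 h11
  have hw : 0 < WR p₀ p₁ l := div_pos hW1 hW0
  have hr : 0 < p₁ / p₀ := div_pos h10 h00
  set w := WR p₀ p₁ l with hwdef
  set r := p₁ / p₀ with hrdef
  set x := w / r with hxdef
  have hx : 0 < x := div_pos hw hr
  have hinv : r / w = x⁻¹ := by
    rw [hxdef]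
    field_simp
  have hBx : B p₀ p₁ l = max x⁻¹ x := by
    rw [B, ← hwdef, ← hrdef, hinv]
  have hge : 1 ≤ max x⁻¹ x := by
    rcases le_or_gt 1 x with h | h
    · exact le_max_of_le_right h
    · exact le_max_of_le_left (one_le_inv_iff₀.mpr ⟨hx, h.le⟩)
  have hiff1 : max x⁻¹ x = 1 ↔ x = 1 := by
    constructor
    · intro h
      have h1 : x ≤ 1 := le_of_max_le_right h.le
      have h2 : x⁻¹ ≤ 1 := le_of_max_le_left h.le
      have h3 : 1 ≤ x := by
        nlinarith [mul_inv_cancel₀ hx.ne', mul_le_mul_of_nonneg_left h2 hx.le]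
      linarith
    · intro h
      simp [h]
  have hxr : x = 1 ↔ w = r := by
    rw [hxdef, div_eq_one_iff_eq hr.ne']
  refine ⟨by rw [hBx]; exact hge, ?_, ?_⟩
  · rw [hBx, hiff1, hxr]
  · intro hne
    have hwr : w ≠ r := by
      intro h
      have hkey : arandaOrdaz l p₁ / p₁ = arandaOrdaz l p₀ / p₀ := by
        rw [hwdef, WR, hrdef] at h
        rw [div_eq_div_iff hW0.ne' h00.ne'] at h
        rw [div_eq_div_iff h10.ne' h00.ne']
        linarith [h]
      rcases lt_or_gt_of_ne hne with hlt | hgt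
      · exact absurd hkey (ne_of_gt (slope_strictMono l hl0 h00 h11 hlt))
      · exact absurd hkey (ne_of_lt (slope_strictMono l hl0 h10 h01 hgt))
    have hx1 : x ≠ 1 := fun h => hwr (hxr.mp h)
    rw [hBx]
    rcases hge.lt_or_eq with h | h
    · exact h
    · exact absurd (hxr.mp (hiff1.mp h.symm)) hwr
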